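/- Let Φ be a family of affine self-maps of 𝕋^d, each of the form φ(x) = Ax + b with A an integer d×d matrix and b ∈ 𝕋^d, and let M(Φ) be the set of matrices occurring in Φ. If every sequence in Φ has a pointwise convergent subsequence, then M(Φ) is finite. -/

import Mathlib

open Filter Topology MeasureTheory AddCircle

noncomputable def affApply {d : ℕ} (A : Matrix (Fin d) (Fin d) ℤ)
    (b : Fin d → AddCircle (2 * Real.pi)) (x : Fin d → AddCircle (2 * Real.pi)) :
    Fin d → AddCircle (2 * Real.pi) :=
  fun i => (∑ j, A i j • x j) + b i

lemma key_scalar (c : ℕ → ℤ) (hc : ∀ i, c i ≠ 0)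
    (h : ∀ t : AddCircle (2 * Real.pi), Tendsto (fun i => c i • t) atTop (𝓝 0)) : False := by
  haveI : Fact (0 < 2 * Real.pi) := ⟨by positivity⟩
  set T := 2 * Real.pi
  -- each character integral is zero
  have hzero : ∀ i, ∫ t : AddCircle T, (fourier (c i) t : ℂ) ∂haarAddCircle = 0 := by
    intro i
    exact integral_eq_zero_of_add_right_eq_neg
      (fourier_add_half_inv_index (hc i) (by positivity))
  -- dominated convergence
  have hlim : Tendsto (fun i => ∫ t : AddCircle T, (fourier (c i) t : ℂ) ∂haarAddCircle)
      atTop (𝓝 (∫ _t : AddCircle T, (1 : ℂ) ∂haarAddCircle)) := by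
    refine tendsto_integral_of_dominated_convergence (fun _ => 1)
      (fun i => (fourier (c i)).continuous.aestronglyMeasurable)
      (integrable_const 1) (fun i => ?_) ?_
    · filter_upwards with t
      have : ‖(fourier (c i) t : ℂ)‖ = 1 := by
        rw [fourier_apply]; exact Circle.norm_coe _
      exact this.le
    · filter_upwards with t
      have h1 : Tendsto (fun i => (fourier 1 (c i • t) : ℂ)) atTop (𝓝 (fourier 1 (0 : AddCircle T))) :=
        ((fourier 1).continuous.tendsto 0).comp (h t)
      have h2 : ∀ i, (fourier 1 (c i • t) : ℂ) = fourier (c i) t := by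
        intro i
        rw [fourier_apply, fourier_apply, one_zsmul]
      rw [fourier_eval_zero] at h1
      simpa [h2] using h1
  simp only [hzero, integral_const, measure_univ, probReal_univ, one_smul] at hlim
  exact zero_ne_one (tendsto_nhds_unique tendsto_const_nhds hlim)

theorem stmt3 {d : ℕ}
    (Φ : Set (Matrix (Fin d) (Fin d) ℤ × (Fin d → AddCircle (2 * Real.pi))))
    (h : ∀ φ : ℕ → Matrix (Fin d) (Fin d) ℤ × (Fin d → AddCircle (2 * Real.pi)),
      (∀ n, φ n ∈ Φ) → ∃ k : ℕ → ℕ, StrictMono k ∧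
        ∀ x, ∃ L, Tendsto (fun i => affApply (φ (k i)).1 (φ (k i)).2 x) atTop (𝓝 L)) :
    (Prod.fst '' Φ).Finite := by
  by_contra hfin
  have hinf : (Prod.fst '' Φ).Infinite := hfin
  set e := hinf.natEmbedding with he
  set A : ℕ → Matrix (Fin d) (Fin d) ℤ := fun n => (e n : Matrix (Fin d) (Fin d) ℤ) with hA
  have hAinj : Function.Injective A :=
    Subtype.coe_injective.comp e.injective
  have hAmem : ∀ n, ∃ q ∈ Φ, q.1 = A n := fun n => (e n).2
  choose p hpΦ hp1 using hAmem
  obtain ⟨k, hk, hconv⟩ := h p hpΦ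
  choose L hL using hconv
  -- differences of consecutive linear parts tend to 0
  have hdiff : ∀ x : Fin d → AddCircle (2 * Real.pi), Tendsto
      (fun i => (fun j => ∑ l, (A (k (i+1)) - A (k i)) j l • x l :
        Fin d → AddCircle (2 * Real.pi))) atTop (𝓝 0) := by
    intro x
    have t1 := hL x
    have t2 : Tendsto (fun i => affApply (p (k (i+1))).1 (p (k (i+1))).2 x) atTop (𝓝 (L x)) :=
      t1.comp (tendsto_add_atTop_nat 1)
    have t3 := hL 0
    have t4 : Tendsto (fun i => affApply (p (k (i+1))).1 (p (k (i+1))).2 0) atTop (𝓝 (L 0)) :=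
      t3.comp (tendsto_add_atTop_nat 1)
    have key := (t2.sub t1).sub (t4.sub t3)
    rw [sub_self, sub_self, sub_self] at key
    convert key using 2 with i
    funext j
    simp only [affApply, Pi.sub_apply, Matrix.sub_apply, sub_smul, Finset.sum_sub_distrib,
      Pi.zero_apply, smul_zero, Finset.sum_const_zero, zero_add, hp1]
    abel
  -- the difference matrices are nonzero
  set C : ℕ → Matrix (Fin d) (Fin d) ℤ := fun i => A (k (i+1)) - A (k i) with hC
  have hCne : ∀ i, ∃ rs : Fin d × Fin d, C i rs.1 rs.2 ≠ 0 := by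
    intro i
    by_contra hcon
    push_neg at hcon
    have : C i = 0 := by
      ext r s; exact hcon ⟨r, s⟩
    have : A (k (i+1)) = A (k i) := by
      rwa [hC, sub_eq_zero] at this
    exact absurd (hAinj this) (Nat.ne_of_gt (hk (Nat.lt_succ_self i)))
  choose rs hrs using hCne
  obtain ⟨v, hv⟩ := Finite.exists_infinite_fiber rs
  have hfreq : ∃ᶠ i in atTop, rs i = v := by
    rw [Nat.frequently_atTop_iff_infinite]
    exact Set.infinite_coe_iff.mp hv
  obtain ⟨m, hm, hmv⟩ := extraction_of_frequently_atTop hfreq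
  set c : ℕ → ℤ := fun j => C (m j) v.1 v.2 with hcdef
  have hcne : ∀ j, c j ≠ 0 := by
    intro j
    have := hrs (m j)
    rwa [hmv j] at this
  refine key_scalar c hcne (fun t => ?_)
  have hx := hdiff (fun l => if l = v.2 then t else 0)
  have hxr := (tendsto_pi_nhds.mp hx) v.1
  have hsum : ∀ i, (∑ l, C i v.1 l • (if l = v.2 then t else 0)) = C i v.1 v.2 • t := by
    intro i
    rw [Finset.sum_eq_single v.2]
    · simp
    · intro l _ hl; simp [hl]
    · intro hmem; exact absurd (Finset.mem_univ v.2) hmem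
  simp only [show ∀ i, A (k (i+1)) - A (k i) = C i from fun i => rfl, hsum] at hxr
  have := hxr.comp hm.tendsto_atTop
  exact this
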